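/- Vanishing of the upper-tail sum: Let 0 < Γ(0) < Γ(1) < 1, let 0 < μ(1) < 1 with μ(0) = 1 − μ(1), let ρ > 0, let L : ℕ → ℕ be a ρ-admissible scaling, and let ν′ ∈ (0, 1) satisfy 1 + ρ ln(Γ(1)^{ν′} Γ(0)^{1−ν′}) > 0. Then Σ_{ℓ=⌊ν′ L_n⌋+1}^{L_n} n C(L_n,ℓ) μ(1)^ℓ μ(0)^{L_n−ℓ} (1 − Γ(1)^ℓ Γ(0)^{L_n−ℓ})^{n−1} → 0 as n → ∞. -/

import Mathlib

open MeasureTheory Filter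

/-- Bernoulli measure on `Bool` with parameter `p` = probability of `true`. -/
noncomputable def bern (p : ℝ) : Measure Bool :=
  (Real.toNNReal p) • Measure.dirac true + (Real.toNNReal (1 - p)) • Measure.dirac false

/-- Uniform distribution on `[0,1]`. -/
noncomputable def unif01 : Measure ℝ := MeasureTheory.volume.restrict (Set.Icc (0:ℝ) 1)

/-- The probability space of the homogeneous binary MAG model `M(n;L)`:
i.i.d. Bernoulli attribute bits and, independently, i.i.d. Uniform(0,1) variables. -/
noncomputable def magMeasure (n L : ℕ) (p : ℝ) :
    Measure ((Fin n → Fin L → Bool) × (Fin n × Fin n → ℝ)) :=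
  (Measure.pi fun _ : Fin n => Measure.pi fun _ : Fin L => bern p).prod
    (Measure.pi fun _ : Fin n × Fin n => unif01)

/-- `Q_L(a,b) = ∏_{ℓ} q(a_ℓ, b_ℓ)`. -/
def QL {L : ℕ} (q : Bool → Bool → ℝ) (a b : Fin L → Bool) : ℝ :=
  ∏ ℓ : Fin L, q (a ℓ) (b ℓ)

/-- Distinct nodes `u, v` are adjacent iff `U(u,v) ≤ Q_L(A(u),A(v))`, where the uniform
variable attached to the unordered pair `{u,v}` is the one indexed by `(min u v, max u v)`. -/
def Adj {n L : ℕ} (q : Bool → Bool → ℝ)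
    (ω : (Fin n → Fin L → Bool) × (Fin n × Fin n → ℝ)) (u v : Fin n) : Prop :=
  u ≠ v ∧ ω.2 (min u v, max u v) ≤ QL q (ω.1 u) (ω.1 v)

/-- Node `u` is isolated if it is adjacent to no other node. -/
def Isolated {n L : ℕ} (q : Bool → Bool → ℝ)
    (ω : (Fin n → Fin L → Bool) × (Fin n × Fin n → ℝ)) (u : Fin n) : Prop :=
  ∀ v, ¬ Adj q ω u v

/-- `S_L(u)`: the number of attributes exhibited by node `u`. -/
def Scount {n L : ℕ} (ω : (Fin n → Fin L → Bool) × (Fin n × Fin n → ℝ)) (u : Fin n) : ℕ :=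
  (Finset.univ.filter fun ℓ : Fin L => ω.1 u ℓ = true).card

open scoped Classical in
/-- `I_n(L)`: the number of isolated nodes. -/
noncomputable def numIsolated {n L : ℕ} (q : Bool → Bool → ℝ)
    (ω : (Fin n → Fin L → Bool) × (Fin n × Fin n → ℝ)) : ℕ :=
  (Finset.univ.filter fun u : Fin n => Isolated q ω u).card

open scoped Classical in
/-- `I_n^{(k)}(L)`: the number of isolated nodes `u` with `S_L(u) = k`. -/
noncomputable def numIsolatedWith {n L : ℕ} (q : Bool → Bool → ℝ) (k : ℕ)
    (ω : (Fin n → Fin L → Bool) × (Fin n × Fin n → ℝ)) : ℕ :=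
  (Finset.univ.filter fun u : Fin n => Isolated q ω u ∧ Scount ω u = k).card

open scoped Classical in
/-- `ξ^{(k)}(u)`: the indicator that node `u` is isolated and `S_L(u) = k`. -/
noncomputable def xiInd {n L : ℕ} (q : Bool → Bool → ℝ) (k : ℕ)
    (ω : (Fin n → Fin L → Bool) × (Fin n × Fin n → ℝ)) (u : Fin n) : ℝ :=
  if Isolated q ω u ∧ Scount ω u = k then 1 else 0

/-- `Γ(a) = μ(0) q(a,0) + μ(1) q(a,1)`, with `μ(1) = μ1`, `μ(0) = 1 - μ1`. -/
def Gam (μ1 : ℝ) (q : Bool → Bool → ℝ) (a : Bool) : ℝ :=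
  (1 - μ1) * q a false + μ1 * q a true

/-- A scaling `L : ℕ → ℕ` is `ρ`-admissible if `L_n ~ ρ ln n` as `n → ∞`. -/
def Admissible (ρ : ℝ) (L : ℕ → ℕ) : Prop :=
  Asymptotics.IsEquivalent Filter.atTop (fun n => (L n : ℝ)) (fun n => ρ * Real.log n)

/-- `G(ν,μ) = (μ/ν)^ν ((1-μ)/(1-ν))^{1-ν}` (real powers; the conventions at `ν = 0,1`
agree with the continuous extension). -/
noncomputable def Gfun (ν μ : ℝ) : ℝ :=
  (μ / ν) ^ ν * ((1 - μ) / (1 - ν)) ^ (1 - ν)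

/-- `Q*_L(a) = E[Q_L(a,A)]`, `A` a vector of `L` i.i.d. Bernoulli(μ1) bits. -/
noncomputable def Qstar {L : ℕ} (μ1 : ℝ) (q : Bool → Bool → ℝ) (a : Fin L → Bool) : ℝ :=
  ∫ b, QL q a b ∂(Measure.pi fun _ : Fin L => bern μ1)

/-- `Q**_L(a,b) = E[Q_L(a,A) Q_L(b,A)]`. -/
noncomputable def Qstarstar {L : ℕ} (μ1 : ℝ) (q : Bool → Bool → ℝ) (a b : Fin L → Bool) : ℝ :=
  ∫ c, QL q a c * QL q b c ∂(Measure.pi fun _ : Fin L => bern μ1)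

/-- `Q̃_L(a,b) = Q*_L(a) + Q*_L(b) − Q**_L(a,b)`. -/
noncomputable def Qtilde {L : ℕ} (μ1 : ℝ) (q : Bool → Bool → ℝ) (a b : Fin L → Bool) : ℝ :=
  Qstar μ1 q a + Qstar μ1 q b - Qstarstar μ1 q a b


private lemma aux_mul_exp_tendsto (β : ℝ) (hβ : β < 1) :
    Tendsto (fun x : ℝ => x * Real.exp (-(1/2) * x ^ ((1:ℝ) - β))) atTop (nhds 0) := by
  have hr : 0 < 1 - β := by linarith
  have h1 : Tendsto (fun x : ℝ => Real.log x - (1/2) * x ^ ((1:ℝ) - β)) atTop atBot := by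
    apply tendsto_atBot_mono' atTop (f₁ := fun x : ℝ => -((1/4) * x ^ ((1:ℝ) - β)))
    · filter_upwards [(isLittleO_log_rpow_atTop hr).def (by norm_num : (0:ℝ) < 1/4),
        eventually_ge_atTop (1:ℝ)] with x hx hx1
      have hxpos : (0:ℝ) < x := lt_of_lt_of_le one_pos hx1
      have hrp : 0 ≤ x ^ ((1:ℝ) - β) := Real.rpow_nonneg hxpos.le _
      rw [Real.norm_eq_abs, Real.norm_eq_abs, abs_of_nonneg hrp] at hx
      have := le_trans (le_abs_self _) hx
      linarith
    · have h2 : Tendsto (fun x : ℝ => (1/4) * x ^ ((1:ℝ) - β)) atTop atTop :=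
        (tendsto_rpow_atTop hr).const_mul_atTop (by norm_num)
      exact tendsto_neg_atTop_atBot.comp h2
  have h2 : Tendsto (fun x : ℝ => Real.exp (Real.log x - (1/2) * x ^ ((1:ℝ) - β)))
      atTop (nhds 0) := Real.tendsto_exp_atBot.comp h1
  apply h2.congr'
  filter_upwards [eventually_gt_atTop (0:ℝ)] with x hx
  rw [Real.exp_sub, Real.exp_log hx, neg_mul, Real.exp_neg, div_eq_mul_inv]

set_option maxHeartbeats 1000000 in
theorem upper_tail_sum_vanishes
    (Γ0 Γ1 : ℝ) (hΓ0 : 0 < Γ0) (hΓ01 : Γ0 < Γ1) (hΓ1 : Γ1 < 1)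
    (μ1 : ℝ) (hμ1 : μ1 ∈ Set.Ioo (0:ℝ) 1)
    (ρ : ℝ) (hρ : 0 < ρ) (L : ℕ → ℕ) (hL : Admissible ρ L)
    (ν' : ℝ) (hν' : ν' ∈ Set.Ioo (0:ℝ) 1)
    (hG : 1 + ρ * Real.log (Γ1 ^ ν' * Γ0 ^ (1 - ν')) > 0) :
    Tendsto
      (fun n => ∑ ℓ ∈ Finset.Icc (⌊ν' * (L n : ℝ)⌋₊ + 1) (L n),
        (n : ℝ) * ((L n).choose ℓ : ℝ) * μ1 ^ ℓ * (1 - μ1) ^ (L n - ℓ) *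
          (1 - Γ1 ^ ℓ * Γ0 ^ (L n - ℓ)) ^ (n - 1))
      atTop (nhds 0) := by
  obtain ⟨hμ0, hμlt⟩ := hμ1
  obtain ⟨hν0, hν1⟩ := hν'
  have hΓ1pos : 0 < Γ1 := hΓ0.trans hΓ01
  have hΓ0lt1 : Γ0 < 1 := hΓ01.trans hΓ1
  set c : ℝ := Γ1 ^ ν' * Γ0 ^ (1 - ν') with hcdef
  have hc0 : 0 < c := mul_pos (Real.rpow_pos_of_pos hΓ1pos _) (Real.rpow_pos_of_pos hΓ0 _)
  have hc1 : c < 1 := by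
    have h1 : Γ1 ^ ν' ≤ 1 := Real.rpow_le_one hΓ1pos.le hΓ1.le hν0.le
    have h2 : Γ0 ^ (1 - ν') < 1 := Real.rpow_lt_one hΓ0.le hΓ0lt1 (by linarith)
    calc c ≤ 1 * Γ0 ^ (1 - ν') :=
          mul_le_mul_of_nonneg_right h1 (Real.rpow_pos_of_pos hΓ0 _).le
      _ = Γ0 ^ (1 - ν') := one_mul _
      _ < 1 := h2
  have hlogc : Real.log c < 0 := Real.log_neg hc0 hc1
  set α : ℝ := -(ρ * Real.log c) with hαdef
  have hα0 : 0 < α := by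
    have := mul_neg_of_pos_of_neg hρ hlogc
    simp only [hαdef]; linarith
  have hα1 : α < 1 := by simp only [hαdef]; linarith [hG]
  set β : ℝ := (1 + α) / 2 with hβdef
  have hβα : α < β := by simp only [hβdef]; linarith
  have hβ1 : β < 1 := by simp only [hβdef]; linarith
  have hβ0 : 0 < β := by simp only [hβdef]; linarith
  have hρc : ρ * Real.log c = -α := by simp [hαdef]
  -- key pointwise inequality
  have hkey : ∀ n ℓ : ℕ, ℓ ∈ Finset.Icc (⌊ν' * (L n : ℝ)⌋₊ + 1) (L n) →
      c ^ ((L n : ℝ)) ≤ Γ1 ^ ℓ * Γ0 ^ (L n - ℓ) := by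
    intro n ℓ hℓ
    obtain ⟨h1, h2⟩ := Finset.mem_Icc.1 hℓ
    have hx1 : ν' * (L n : ℝ) ≤ (ℓ : ℝ) := by
      have ha : ν' * (L n : ℝ) < (⌊ν' * (L n : ℝ)⌋₊ : ℝ) + 1 := Nat.lt_floor_add_one _
      have hb : ((⌊ν' * (L n : ℝ)⌋₊ : ℝ) + 1) ≤ (ℓ : ℝ) := by exact_mod_cast h1
      linarith
    have hx2 : (ℓ : ℝ) ≤ (L n : ℝ) := by exact_mod_cast h2
    have hcast : ((L n - ℓ : ℕ) : ℝ) = (L n : ℝ) - (ℓ : ℝ) := Nat.cast_sub h2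
    rw [← Real.rpow_natCast Γ1 ℓ, ← Real.rpow_natCast Γ0 (L n - ℓ), hcast]
    have e1 : ∀ t : ℝ, Γ1 ^ t * Γ0 ^ ((L n : ℝ) - t) = Γ0 ^ ((L n : ℝ)) * (Γ1 / Γ0) ^ t := by
      intro t
      rw [Real.div_rpow hΓ1pos.le hΓ0.le, Real.rpow_sub hΓ0]
      ring
    have e2 : c ^ ((L n : ℝ)) = Γ1 ^ (ν' * (L n : ℝ)) * Γ0 ^ ((L n : ℝ) - ν' * (L n : ℝ)) := by
      rw [hcdef, Real.mul_rpow (Real.rpow_nonneg hΓ1pos.le _) (Real.rpow_nonneg hΓ0.le _),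
        ← Real.rpow_mul hΓ1pos.le, ← Real.rpow_mul hΓ0.le]
      ring_nf
    rw [e2, e1, e1]
    apply mul_le_mul_of_nonneg_left _ (Real.rpow_nonneg hΓ0.le _)
    exact Real.rpow_le_rpow_of_exponent_le ((one_le_div hΓ0).2 hΓ01.le) hx1
  have hΓle1 : ∀ k m : ℕ, Γ1 ^ k * Γ0 ^ m ≤ 1 := by
    intro k m
    have h1 : Γ1 ^ k ≤ 1 := pow_le_one₀ hΓ1pos.le hΓ1.le
    have h2 : Γ0 ^ m ≤ 1 := pow_le_one₀ hΓ0.le hΓ0lt1.le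
    have := mul_le_mul h1 h2 (pow_nonneg hΓ0.le m) zero_le_one
    simpa using this
  have hc1le : ∀ n : ℕ, 0 ≤ 1 - c ^ ((L n : ℝ)) := by
    intro n
    have : c ^ ((L n : ℝ)) ≤ 1 := Real.rpow_le_one hc0.le hc1.le (Nat.cast_nonneg _)
    linarith
  -- sum bound
  have hsum : ∀ n : ℕ,
      (∑ ℓ ∈ Finset.Icc (⌊ν' * (L n : ℝ)⌋₊ + 1) (L n),
        (n : ℝ) * ((L n).choose ℓ : ℝ) * μ1 ^ ℓ * (1 - μ1) ^ (L n - ℓ) *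
          (1 - Γ1 ^ ℓ * Γ0 ^ (L n - ℓ)) ^ (n - 1))
      ≤ (n : ℝ) * (1 - c ^ ((L n : ℝ))) ^ (n - 1) := by
    intro n
    have h01 := hc1le n
    calc (∑ ℓ ∈ Finset.Icc (⌊ν' * (L n : ℝ)⌋₊ + 1) (L n),
          (n : ℝ) * ((L n).choose ℓ : ℝ) * μ1 ^ ℓ * (1 - μ1) ^ (L n - ℓ) *
            (1 - Γ1 ^ ℓ * Γ0 ^ (L n - ℓ)) ^ (n - 1))
        ≤ ∑ ℓ ∈ Finset.Icc (⌊ν' * (L n : ℝ)⌋₊ + 1) (L n),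
          (n : ℝ) * ((L n).choose ℓ : ℝ) * μ1 ^ ℓ * (1 - μ1) ^ (L n - ℓ) *
            (1 - c ^ ((L n : ℝ))) ^ (n - 1) := by
          apply Finset.sum_le_sum
          intro ℓ hℓ
          have hk := hkey n ℓ hℓ
          apply mul_le_mul_of_nonneg_left _
            (mul_nonneg (mul_nonneg (mul_nonneg (Nat.cast_nonneg n) (Nat.cast_nonneg _))
              (pow_nonneg hμ0.le _)) (pow_nonneg (by linarith) _))
          apply pow_le_pow_left₀ (by linarith [hΓle1 ℓ (L n - ℓ)])
          linarith
      _ = ((n : ℝ) * (1 - c ^ ((L n : ℝ))) ^ (n - 1)) *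
            ∑ ℓ ∈ Finset.Icc (⌊ν' * (L n : ℝ)⌋₊ + 1) (L n),
              μ1 ^ ℓ * (1 - μ1) ^ (L n - ℓ) * ((L n).choose ℓ : ℝ) := by
          rw [Finset.mul_sum]
          exact Finset.sum_congr rfl (fun ℓ _ => by ring)
      _ ≤ ((n : ℝ) * (1 - c ^ ((L n : ℝ))) ^ (n - 1)) * 1 := by
          apply mul_le_mul_of_nonneg_left _
            (mul_nonneg (Nat.cast_nonneg n) (pow_nonneg h01 _))
          calc (∑ ℓ ∈ Finset.Icc (⌊ν' * (L n : ℝ)⌋₊ + 1) (L n),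
                μ1 ^ ℓ * (1 - μ1) ^ (L n - ℓ) * ((L n).choose ℓ : ℝ))
              ≤ ∑ ℓ ∈ Finset.range (L n + 1),
                μ1 ^ ℓ * (1 - μ1) ^ (L n - ℓ) * ((L n).choose ℓ : ℝ) := by
                apply Finset.sum_le_sum_of_subset_of_nonneg
                · intro x hx
                  simp only [Finset.mem_Icc, Finset.mem_range] at *
                  omega
                · intro i _ _
                  exact mul_nonneg (mul_nonneg (pow_nonneg hμ0.le _)
                    (pow_nonneg (by linarith) _)) (Nat.cast_nonneg _)
            _ = (μ1 + (1 - μ1)) ^ (L n) := (add_pow μ1 (1 - μ1) (L n)).symm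
            _ = 1 := by norm_num
      _ = (n : ℝ) * (1 - c ^ ((L n : ℝ))) ^ (n - 1) := mul_one _
  -- nonnegativity
  have hnonneg : ∀ n : ℕ, 0 ≤
      (∑ ℓ ∈ Finset.Icc (⌊ν' * (L n : ℝ)⌋₊ + 1) (L n),
        (n : ℝ) * ((L n).choose ℓ : ℝ) * μ1 ^ ℓ * (1 - μ1) ^ (L n - ℓ) *
          (1 - Γ1 ^ ℓ * Γ0 ^ (L n - ℓ)) ^ (n - 1)) := by
    intro n
    apply Finset.sum_nonneg
    intro ℓ _
    have h1 : (0:ℝ) ≤ 1 - Γ1 ^ ℓ * Γ0 ^ (L n - ℓ) := by linarith [hΓle1 ℓ (L n - ℓ)]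
    have h2 : (0:ℝ) ≤ (1 - Γ1 ^ ℓ * Γ0 ^ (L n - ℓ)) ^ (n - 1) := pow_nonneg h1 _
    exact mul_nonneg (mul_nonneg (mul_nonneg (mul_nonneg (Nat.cast_nonneg n)
      (Nat.cast_nonneg _)) (pow_nonneg hμ0.le _)) (pow_nonneg (by linarith) _)) h2
  -- squeeze
  apply squeeze_zero' (Filter.Eventually.of_forall hnonneg)
    (g := fun n : ℕ => (n : ℝ) * Real.exp (-(1/2) * (n : ℝ) ^ ((1:ℝ) - β)))
  · -- eventual upper bound
    have hlo := (hL.isLittleO).def (show (0:ℝ) < (β - α) / α from div_pos (by linarith) hα0)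
    filter_upwards [hlo, eventually_ge_atTop 2] with n hb hn2
    have hn0 : (0:ℝ) < (n : ℝ) := by
      have : (2:ℝ) ≤ (n : ℝ) := by exact_mod_cast hn2
      linarith
    have hn1 : (1:ℝ) ≤ (n : ℝ) := by linarith [show (2:ℝ) ≤ (n:ℝ) by exact_mod_cast hn2]
    have hlogn : 0 ≤ Real.log n := Real.log_nonneg hn1
    simp only [Pi.sub_apply, Real.norm_eq_abs] at hb
    rw [abs_of_nonneg (by positivity : (0:ℝ) ≤ ρ * Real.log n)] at hb
    have hb2 : (L n : ℝ) - ρ * Real.log n ≤ (β - α) / α * (ρ * Real.log n) :=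
      le_trans (le_abs_self _) hb
    have hLle : (L n : ℝ) ≤ β / α * (ρ * Real.log n) := by
      have : (1 + (β - α)/α) * (ρ * Real.log n) = β / α * (ρ * Real.log n) := by
        field_simp
        ring
      nlinarith [hb2]
    have hE1 : -β * Real.log n ≤ (L n : ℝ) * Real.log c := by
      have hm := mul_le_mul_of_nonpos_right hLle hlogc.le
      have heq : β / α * (ρ * Real.log n) * Real.log c = -β * Real.log n := by
        have h3 : β / α * (ρ * Real.log n) * Real.log c
            = β / α * (ρ * Real.log c) * Real.log n := by ring
        rw [h3, hρc]
        field_simp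
      linarith [hm, heq.ge, heq.le]
    have hE2 : (n : ℝ) ^ (-β) ≤ c ^ ((L n : ℝ)) := by
      rw [Real.rpow_def_of_pos hc0, Real.rpow_def_of_pos hn0]
      apply Real.exp_le_exp.2
      nlinarith [hE1]
    have hcastn : ((n - 1 : ℕ) : ℝ) = (n : ℝ) - 1 := by
      have h1n : 1 ≤ n := by omega
      push_cast [Nat.cast_sub h1n]
      ring
    have hpow : (n : ℝ) ^ ((1:ℝ) - β) = (n : ℝ) * (n : ℝ) ^ (-β) := by
      rw [show (1:ℝ) - β = 1 + -β by ring, Real.rpow_add hn0, Real.rpow_one]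
    have hE3 : (1/2) * (n : ℝ) ^ ((1:ℝ) - β) ≤ ((n - 1 : ℕ) : ℝ) * c ^ ((L n : ℝ)) := by
      rw [hcastn, hpow]
      have hhalf : (n : ℝ) / 2 ≤ (n : ℝ) - 1 := by
        have : (2:ℝ) ≤ (n : ℝ) := by exact_mod_cast hn2
        linarith
      calc (1/2) * ((n : ℝ) * (n : ℝ) ^ (-β)) = ((n : ℝ)/2) * (n : ℝ) ^ (-β) := by ring
        _ ≤ ((n : ℝ) - 1) * c ^ ((L n : ℝ)) := by
            apply mul_le_mul hhalf hE2 (Real.rpow_nonneg hn0.le _) (by linarith)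
    calc (∑ ℓ ∈ Finset.Icc (⌊ν' * (L n : ℝ)⌋₊ + 1) (L n),
          (n : ℝ) * ((L n).choose ℓ : ℝ) * μ1 ^ ℓ * (1 - μ1) ^ (L n - ℓ) *
            (1 - Γ1 ^ ℓ * Γ0 ^ (L n - ℓ)) ^ (n - 1))
        ≤ (n : ℝ) * (1 - c ^ ((L n : ℝ))) ^ (n - 1) := hsum n
      _ ≤ (n : ℝ) * Real.exp (-(c ^ ((L n : ℝ)))) ^ (n - 1) := by
          apply mul_le_mul_of_nonneg_left _ hn0.le
          apply pow_le_pow_left₀ (hc1le n)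
          linarith [Real.add_one_le_exp (-(c ^ ((L n : ℝ))))]
      _ = (n : ℝ) * Real.exp (((n - 1 : ℕ) : ℝ) * (-(c ^ ((L n : ℝ))))) := by
          rw [Real.exp_nat_mul]
      _ ≤ (n : ℝ) * Real.exp (-(1/2) * (n : ℝ) ^ ((1:ℝ) - β)) := by
          apply mul_le_mul_of_nonneg_left _ hn0.le
          apply Real.exp_le_exp.2
          nlinarith [hE3]
  · exact (aux_mul_exp_tendsto β hβ1).comp tendsto_natCast_atTop_atTop
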